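/- arXiv:2306.16871 — 4 statements merged into one kernel-verified Lean document; each statement's English description precedes it below -/
import Mathlib

section
/- Let ψ₀ : [0,∞) → ℝ be continuously differentiable and suppose ∫₀ᵗ ψ₀(s) ds < 1 for all t ≥ 0. Define ψ(t,x) := ψ₀(t+x) / (1 − ∫₀ᵗ ψ₀(s) ds) for t, x ≥ 0. Then ψ(0,x) = ψ₀(x) and ψ satisfies the first-order partial differential equation ∂_t ψ(t,x) = ∂_x ψ(t,x) + ψ(t,x) ψ(t,0) for all t, x ≥ 0. -/
open MeasureTheory intervalIntegral

lemma ftc_Ici (ψ₀ : ℝ → ℝ) (hc : ContinuousOn ψ₀ (Set.Ici 0)) {t : ℝ} (ht : 0 ≤ t) :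
    HasDerivWithinAt (fun s => ∫ u in (0:ℝ)..s, ψ₀ u) (ψ₀ t) (Set.Ici 0) t := by
  have hint : IntervalIntegrable ψ₀ volume 0 t := by
    apply (hc.mono _).intervalIntegrable
    rw [Set.uIcc_of_le ht]
    exact fun y hy => hy.1
  rcases eq_or_lt_of_le ht with rfl | ht'
  · have hmeas : StronglyMeasurableAtFilter ψ₀ (nhdsWithin 0 (Set.Ioi 0)) := by
      refine ⟨Set.Ici 0, ?_, (hc.aestronglyMeasurable measurableSet_Ici)⟩
      exact Filter.mem_of_superset self_mem_nhdsWithin Set.Ioi_subset_Ici_self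
    have hcw : ContinuousWithinAt ψ₀ (Set.Ioi 0) 0 :=
      (hc 0 Set.self_mem_Ici).mono Set.Ioi_subset_Ici_self
    exact integral_hasDerivWithinAt_right hint hmeas hcw
  · have hca : ContinuousAt ψ₀ t :=
      (hc t ht).continuousAt (Ici_mem_nhds ht')
    exact (integral_hasDerivAt_right hint ⟨Set.Ici 0, Ici_mem_nhds ht', hc.aestronglyMeasurable measurableSet_Ici⟩ hca).hasDerivWithinAt

/-- The deterministic discount-curve PDE: with `ψ(t,x) = ψ₀(t+x)/(1−∫₀ᵗψ₀)`,
one has `ψ(0,·) = ψ₀` and `∂ₜψ = ∂ₓψ + ψ(t,x)ψ(t,0)` on `[0,∞)²`. -/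
theorem discount_curve_pde_solution
    (ψ₀ : ℝ → ℝ) (hψ₀ : ContDiffOn ℝ 1 ψ₀ (Set.Ici 0))
    (hlt : ∀ t ≥ (0:ℝ), (∫ s in (0:ℝ)..t, ψ₀ s) < 1)
    (ψ : ℝ → ℝ → ℝ)
    (hψ : ∀ t x, ψ t x = ψ₀ (t + x) / (1 - ∫ s in (0:ℝ)..t, ψ₀ s)) :
    (∀ x ≥ (0:ℝ), ψ 0 x = ψ₀ x) ∧
      ∀ t ≥ (0:ℝ), ∀ x ≥ (0:ℝ),
        ∃ a : ℝ, HasDerivWithinAt (fun y => ψ t y) a (Set.Ici 0) x ∧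
          HasDerivWithinAt (fun s => ψ s x) (a + ψ t x * ψ t 0) (Set.Ici 0) t := by
  constructor
  · intro x _
    rw [hψ, intervalIntegral.integral_same, zero_add, sub_zero, div_one]
  intro t ht x hx
  set g : ℝ → ℝ := derivWithin ψ₀ (Set.Ici 0) with hg
  set D : ℝ := 1 - ∫ s in (0:ℝ)..t, ψ₀ s with hD
  have hDpos : 0 < D := by simpa [hD] using sub_pos.mpr (hlt t ht)
  have hDne : D ≠ 0 := ne_of_gt hDpos
  have hdiff : DifferentiableOn ℝ ψ₀ (Set.Ici 0) := hψ₀.differentiableOn one_ne_zero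
  have hd : ∀ p ≥ (0:ℝ), HasDerivWithinAt ψ₀ (g p) (Set.Ici 0) p := fun p hp =>
    (hdiff p hp).hasDerivWithinAt
  have htx : (0:ℝ) ≤ t + x := by linarith
  -- derivative in x
  have hdx : HasDerivWithinAt (fun y => ψ₀ (t + y)) (g (t + x)) (Set.Ici 0) x := by
    have := (hd (t + x) htx).comp x
      ((hasDerivWithinAt_id x (Set.Ici 0)).const_add t)
      (fun y (hy : 0 ≤ y) => by simp only [Set.mem_Ici]; linarith)
    simpa [Function.comp_def] using this
  refine ⟨g (t + x) / D, ?_, ?_⟩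
  · have : HasDerivWithinAt (fun y => ψ₀ (t + y) / D) (g (t + x) / D) (Set.Ici 0) x :=
      hdx.div_const D
    simp only [hψ, ← hD]
    exact this
  · -- derivative in t
    have hds : HasDerivWithinAt (fun s => ψ₀ (s + x)) (g (t + x)) (Set.Ici 0) t := by
      have := (hd (t + x) htx).comp t
        ((hasDerivWithinAt_id t (Set.Ici 0)).add_const x)
        (fun s (hs : 0 ≤ s) => by simp only [Set.mem_Ici, id]; linarith)
      simpa [Function.comp_def] using this
    have hFt : HasDerivWithinAt (fun s => (1:ℝ) - ∫ u in (0:ℝ)..s, ψ₀ u) (-ψ₀ t)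
        (Set.Ici 0) t :=
      ((ftc_Ici ψ₀ hψ₀.continuousOn ht).const_sub 1).congr_deriv (by ring)
    have hdiv : HasDerivWithinAt (fun s => ψ₀ (s + x) / (1 - ∫ u in (0:ℝ)..s, ψ₀ u))
        ((g (t + x) * D - ψ₀ (t + x) * (-ψ₀ t)) / D ^ 2) (Set.Ici 0) t := by
      have := hds.div hFt hDne
      simpa [← hD, Pi.div_def] using this
    have hDne' : (1 - ∫ s in (0:ℝ)..t, ψ₀ s) ≠ 0 := hD ▸ hDne
    simp only [hψ, add_zero]
    convert hdiv using 1
    rw [hD]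
    field_simp
    ring
end

section
/- Let w : [0,∞) → (0,∞) be measurable and nondecreasing with ∫₀^∞ w(x)^{−1/3} dx < ∞, and let ψ : [0,∞) → ℝ be continuously differentiable with ψ(x) → 0 as x → ∞ and ∫₀^∞ ψ'(x)² w(x) dx < ∞. Then ∫₀^∞ |ψ(x)| dx ≤ (∫₀^∞ w(x)^{−1/3} dx)^{3/2} · (∫₀^∞ ψ'(x)² w(x) dx)^{1/2}. -/
open MeasureTheory

/-- The L¹-bound for the weighted Sobolev space `H_w`: if `w` is a positive
nondecreasing weight with `∫₀^∞ w^{−1/3} < ∞` and `ψ` is continuously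
differentiable on `[0,∞)` with `ψ(∞) = 0` and `∫₀^∞ ψ'² w < ∞`, then
`∫₀^∞ |ψ| ≤ (∫₀^∞ w^{−1/3})^{3/2} (∫₀^∞ ψ'² w)^{1/2}`. -/
theorem weighted_sobolev_L1_bound
    (w : ℝ → ℝ) (hw_meas : Measurable w) (hw_pos : ∀ x ≥ (0:ℝ), 0 < w x)
    (hw_mono : MonotoneOn w (Set.Ici 0))
    (hw_int : IntegrableOn (fun x => w x ^ (-(1/3) : ℝ)) (Set.Ioi 0))
    (ψ ψ' : ℝ → ℝ)
    (hderiv : ∀ x ≥ (0:ℝ), HasDerivWithinAt ψ (ψ' x) (Set.Ici 0) x)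
    (hcont : ContinuousOn ψ' (Set.Ici 0))
    (hlim : Filter.Tendsto ψ Filter.atTop (nhds 0))
    (hnorm : IntegrableOn (fun x => (ψ' x) ^ 2 * w x) (Set.Ioi 0)) :
    IntegrableOn ψ (Set.Ioi 0) ∧
      ∫ x in Set.Ioi 0, |ψ x|
        ≤ (∫ x in Set.Ioi 0, w x ^ (-(1/3) : ℝ)) ^ ((3:ℝ)/2) *
          Real.sqrt (∫ x in Set.Ioi 0, (ψ' x) ^ 2 * w x) := by
  set I₀ : ℝ := ∫ x in Set.Ioi 0, w x ^ (-(1/3) : ℝ) with hI₀def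
  set Nsq : ℝ := ∫ x in Set.Ioi 0, (ψ' x) ^ 2 * w x with hNsqdef
  set N : ℝ := Real.sqrt Nsq with hNdef
  have hI₀nonneg : 0 ≤ I₀ := by
    apply setIntegral_nonneg measurableSet_Ioi
    intro t ht
    exact Real.rpow_nonneg (hw_pos t (le_of_lt ht)).le _
  have hNnonneg : 0 ≤ N := Real.sqrt_nonneg _
  have hψcont : ContinuousOn ψ (Set.Ici 0) :=
    fun x hx => (hderiv x hx).continuousWithinAt
  have hw13nonneg : ∀ t ∈ Set.Ioi (0:ℝ), 0 ≤ w t ^ (-(1/3) : ℝ) := by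
    intro t ht
    exact Real.rpow_nonneg (hw_pos t ht.le).le _
  -- Key pointwise bound : for x ≥ 0, |ψ x| ≤ √I₀ * N * w x ^ (-1/3)
  have key : ∀ x ≥ (0:ℝ), |ψ x| ≤ Real.sqrt I₀ * N * w x ^ (-(1/3) : ℝ) := by
    intro x hx
    have hwx : 0 < w x := hw_pos x hx
    have hsub : Set.Ioi x ⊆ Set.Ioi 0 := Set.Ioi_subset_Ioi hx
    have hwpos' : ∀ t ∈ Set.Ioi x, 0 < w t := fun t ht => hw_pos t (le_trans hx (le_of_lt ht))
    have hptwise : ∀ t ∈ Set.Ioi x, (w t)⁻¹ ≤ w x ^ (-(2/3) : ℝ) * w t ^ (-(1/3) : ℝ) := by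
      intro t ht
      have hwt : 0 < w t := hwpos' t ht
      have hle : w x ≤ w t := hw_mono hx (le_trans hx (le_of_lt ht)) (le_of_lt ht)
      have h1 : (w t)⁻¹ = w t ^ (-(2/3) : ℝ) * w t ^ (-(1/3) : ℝ) := by
        rw [← Real.rpow_add hwt]
        norm_num
        rw [Real.rpow_neg_one]
      rw [h1]
      exact mul_le_mul_of_nonneg_right
        (Real.rpow_le_rpow_of_nonpos hwx hle (by norm_num))
        (Real.rpow_nonneg hwt.le _)
    have hw13x : IntegrableOn (fun t => w t ^ (-(1/3) : ℝ)) (Set.Ioi x) :=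
      hw_int.mono_set hsub
    have hinv_int : IntegrableOn (fun t => (w t)⁻¹) (Set.Ioi x) := by
      apply Integrable.mono' (hw13x.const_mul (w x ^ (-(2/3) : ℝ)))
        hw_meas.inv.aestronglyMeasurable
      filter_upwards [ae_restrict_mem measurableSet_Ioi] with t ht
      rw [Real.norm_eq_abs, Pi.inv_apply, abs_of_nonneg (inv_nonneg.mpr (hwpos' t ht).le)]
      exact hptwise t ht
    have hsq_int : IntegrableOn (fun t => (ψ' t) ^ 2 * w t) (Set.Ioi x) :=
      hnorm.mono_set hsub
    set f : ℝ → ℝ := fun t => |ψ' t| * Real.sqrt (w t) with hfdef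
    set g : ℝ → ℝ := fun t => (Real.sqrt (w t))⁻¹ with hgdef
    have hψ'meas : AEStronglyMeasurable ψ' (volume.restrict (Set.Ioi x)) := by
      have h1 := hcont.aestronglyMeasurable measurableSet_Ici (μ := volume)
      exact h1.mono_measure
        (Measure.restrict_mono (fun t ht => le_trans hx (le_of_lt ht)) le_rfl)
    have hsqrtw_meas : Measurable (fun t => Real.sqrt (w t)) :=
      Real.continuous_sqrt.measurable.comp hw_meas
    have hfmeas : AEStronglyMeasurable f (volume.restrict (Set.Ioi x)) :=
      (continuous_abs.comp_aestronglyMeasurable hψ'meas).mul hsqrtw_meas.aestronglyMeasurable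
    have hgmeas : AEStronglyMeasurable g (volume.restrict (Set.Ioi x)) :=
      hsqrtw_meas.inv.aestronglyMeasurable
    have hfsq : ∀ t ∈ Set.Ioi x, f t ^ 2 = (ψ' t) ^ 2 * w t := by
      intro t ht
      simp only [hfdef, mul_pow, sq_abs, Real.sq_sqrt (hwpos' t ht).le]
    have hgsq : ∀ t ∈ Set.Ioi x, g t ^ 2 = (w t)⁻¹ := by
      intro t ht
      simp only [hgdef, inv_pow, Real.sq_sqrt (hwpos' t ht).le]
    have hf2int : Integrable (fun t => f t ^ 2) (volume.restrict (Set.Ioi x)) := by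
      apply hsq_int.congr
      filter_upwards [ae_restrict_mem measurableSet_Ioi] with t ht
      exact (hfsq t ht).symm
    have hg2int : Integrable (fun t => g t ^ 2) (volume.restrict (Set.Ioi x)) := by
      apply hinv_int.congr
      filter_upwards [ae_restrict_mem measurableSet_Ioi] with t ht
      exact (hgsq t ht).symm
    have hfL2 : MemLp f 2 (volume.restrict (Set.Ioi x)) :=
      (memLp_two_iff_integrable_sq hfmeas).mpr hf2int
    have hgL2 : MemLp g 2 (volume.restrict (Set.Ioi x)) :=
      (memLp_two_iff_integrable_sq hgmeas).mpr hg2int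
    have hfg : ∀ t ∈ Set.Ioi x, f t * g t = |ψ' t| := by
      intro t ht
      have h0 : Real.sqrt (w t) ≠ 0 := ne_of_gt (Real.sqrt_pos.mpr (hwpos' t ht))
      simp only [hfdef, hgdef]
      rw [mul_assoc, mul_inv_cancel₀ h0, mul_one]
    -- integrability of ψ' on Ioi x via AM-GM
    have hψ'int : IntegrableOn ψ' (Set.Ioi x) := by
      apply Integrable.mono' ((hf2int.add hg2int).const_mul (1/2 : ℝ)) hψ'meas
      filter_upwards [ae_restrict_mem measurableSet_Ioi] with t ht
      rw [Real.norm_eq_abs, ← hfg t ht]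
      simp only [Pi.add_apply]
      nlinarith [sq_nonneg (f t - g t)]
    -- FTC on (x, ∞)
    have hFTC : ∫ t in Set.Ioi x, ψ' t = 0 - ψ x := by
      apply MeasureTheory.integral_Ioi_of_hasDerivAt_of_tendsto
      · exact ((hderiv x hx).continuousWithinAt).mono (Set.Ici_subset_Ici.mpr hx)
      · intro t ht
        have ht0 : 0 < t := lt_of_le_of_lt hx ht
        exact (hderiv t ht0.le).hasDerivAt (Ici_mem_nhds ht0)
      · exact hψ'int
      · exact hlim
    have hψx : |ψ x| = |∫ t in Set.Ioi x, ψ' t| := by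
      rw [hFTC, zero_sub, abs_neg]
    have habs : |∫ t in Set.Ioi x, ψ' t| ≤ ∫ t in Set.Ioi x, |ψ' t| := by
      simpa [Real.norm_eq_abs] using
        norm_integral_le_integral_norm (μ := volume.restrict (Set.Ioi x)) ψ'
    have hcongr : ∫ t in Set.Ioi x, |ψ' t| = ∫ t in Set.Ioi x, f t * g t := by
      apply integral_congr_ae
      filter_upwards [ae_restrict_mem measurableSet_Ioi] with t ht
      exact (hfg t ht).symm
    -- Hölder
    have hconj : Real.HolderConjugate 2 2 := Real.HolderConjugate.two_two
    have h2e : ENNReal.ofReal (2:ℝ) = 2 := by norm_num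
    have hholder :
        (∫ t in Set.Ioi x, f t * g t)
          ≤ (∫ t in Set.Ioi x, f t ^ (2:ℝ)) ^ ((1:ℝ)/2) *
            (∫ t in Set.Ioi x, g t ^ (2:ℝ)) ^ ((1:ℝ)/2) := by
      apply integral_mul_le_Lp_mul_Lq_of_nonneg hconj
      · exact Filter.Eventually.of_forall fun t =>
          mul_nonneg (abs_nonneg _) (Real.sqrt_nonneg _)
      · exact Filter.Eventually.of_forall fun t =>
          inv_nonneg.mpr (Real.sqrt_nonneg _)
      · rwa [h2e]
      · rwa [h2e]
    have hrpow2f : ∀ t : ℝ, f t ^ (2:ℝ) = f t ^ 2 := fun t => by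
      rw [show (2:ℝ) = ((2:ℕ):ℝ) by norm_num, Real.rpow_natCast]
    have hrpow2g : ∀ t : ℝ, g t ^ (2:ℝ) = g t ^ 2 := fun t => by
      rw [show (2:ℝ) = ((2:ℕ):ℝ) by norm_num, Real.rpow_natCast]
    have hAeq : ∫ t in Set.Ioi x, f t ^ (2:ℝ) = ∫ t in Set.Ioi x, f t ^ 2 := by
      simp only [hrpow2f]
    have hBeq : ∫ t in Set.Ioi x, g t ^ (2:ℝ) = ∫ t in Set.Ioi x, g t ^ 2 := by
      simp only [hrpow2g]
    have hA_nonneg : 0 ≤ ∫ t in Set.Ioi x, f t ^ 2 :=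
      integral_nonneg fun t => sq_nonneg _
    have hB_nonneg : 0 ≤ ∫ t in Set.Ioi x, g t ^ 2 :=
      integral_nonneg fun t => sq_nonneg _
    -- A ≤ Nsq
    have hA_le : (∫ t in Set.Ioi x, f t ^ 2) ≤ Nsq := by
      have h1 : ∫ t in Set.Ioi x, f t ^ 2 = ∫ t in Set.Ioi x, (ψ' t) ^ 2 * w t := by
        apply integral_congr_ae
        filter_upwards [ae_restrict_mem measurableSet_Ioi] with t ht
        exact hfsq t ht
      rw [h1, hNsqdef]
      apply setIntegral_mono_set hnorm
      · filter_upwards [ae_restrict_mem measurableSet_Ioi] with t ht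
        exact mul_nonneg (sq_nonneg _) (hw_pos t ht.le).le
      · exact HasSubset.Subset.eventuallyLE hsub
    -- B ≤ w x ^ (-2/3) * I₀
    have hB_le : (∫ t in Set.Ioi x, g t ^ 2) ≤ w x ^ (-(2/3) : ℝ) * I₀ := by
      have h1 : ∫ t in Set.Ioi x, g t ^ 2 = ∫ t in Set.Ioi x, (w t)⁻¹ := by
        apply integral_congr_ae
        filter_upwards [ae_restrict_mem measurableSet_Ioi] with t ht
        exact hgsq t ht
      have h2 : (∫ t in Set.Ioi x, (w t)⁻¹)
          ≤ ∫ t in Set.Ioi x, w x ^ (-(2/3) : ℝ) * w t ^ (-(1/3) : ℝ) :=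
        setIntegral_mono_on hinv_int (hw13x.const_mul _) measurableSet_Ioi hptwise
      have h3 : (∫ t in Set.Ioi x, w x ^ (-(2/3) : ℝ) * w t ^ (-(1/3) : ℝ))
          = w x ^ (-(2/3) : ℝ) * ∫ t in Set.Ioi x, w t ^ (-(1/3) : ℝ) :=
        integral_const_mul _ _
      have h4 : (∫ t in Set.Ioi x, w t ^ (-(1/3) : ℝ)) ≤ I₀ := by
        rw [hI₀def]
        apply setIntegral_mono_set hw_int
        · filter_upwards [ae_restrict_mem measurableSet_Ioi] with t ht
          exact hw13nonneg t ht
        · exact HasSubset.Subset.eventuallyLE hsub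
      rw [h1]
      calc (∫ t in Set.Ioi x, (w t)⁻¹)
          ≤ w x ^ (-(2/3) : ℝ) * ∫ t in Set.Ioi x, w t ^ (-(1/3) : ℝ) := by rw [← h3]; exact h2
        _ ≤ w x ^ (-(2/3) : ℝ) * I₀ :=
            mul_le_mul_of_nonneg_left h4 (Real.rpow_nonneg hwx.le _)
    -- put the pieces together
    have hApow : (∫ t in Set.Ioi x, f t ^ (2:ℝ)) ^ ((1:ℝ)/2) ≤ N := by
      rw [hAeq, hNdef, Real.sqrt_eq_rpow]
      exact Real.rpow_le_rpow hA_nonneg hA_le (by norm_num)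
    have hBpow : (∫ t in Set.Ioi x, g t ^ (2:ℝ)) ^ ((1:ℝ)/2)
        ≤ w x ^ (-(1/3) : ℝ) * Real.sqrt I₀ := by
      rw [hBeq]
      have h5 : (∫ t in Set.Ioi x, g t ^ 2) ^ ((1:ℝ)/2)
          ≤ (w x ^ (-(2/3) : ℝ) * I₀) ^ ((1:ℝ)/2) :=
        Real.rpow_le_rpow hB_nonneg hB_le (by norm_num)
      have h6 : (w x ^ (-(2/3) : ℝ) * I₀) ^ ((1:ℝ)/2)
          = w x ^ (-(1/3) : ℝ) * Real.sqrt I₀ := by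
        rw [Real.mul_rpow (Real.rpow_nonneg hwx.le _) hI₀nonneg,
          ← Real.rpow_mul hwx.le, Real.sqrt_eq_rpow]
        norm_num
      exact h5.trans_eq h6
    have hABnonneg : 0 ≤ (∫ t in Set.Ioi x, f t ^ (2:ℝ)) ^ ((1:ℝ)/2) :=
      Real.rpow_nonneg (by rw [hAeq]; exact hA_nonneg) _
    calc |ψ x| = |∫ t in Set.Ioi x, ψ' t| := hψx
      _ ≤ ∫ t in Set.Ioi x, |ψ' t| := habs
      _ = ∫ t in Set.Ioi x, f t * g t := hcongr
      _ ≤ (∫ t in Set.Ioi x, f t ^ (2:ℝ)) ^ ((1:ℝ)/2) *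
            (∫ t in Set.Ioi x, g t ^ (2:ℝ)) ^ ((1:ℝ)/2) := hholder
      _ ≤ N * (w x ^ (-(1/3) : ℝ) * Real.sqrt I₀) := by
          apply mul_le_mul hApow hBpow
            (Real.rpow_nonneg (by rw [hBeq]; exact hB_nonneg) _) hNnonneg
      _ = Real.sqrt I₀ * N * w x ^ (-(1/3) : ℝ) := by ring
  -- integrability of ψ
  have hψmeas : AEStronglyMeasurable ψ (volume.restrict (Set.Ioi 0)) :=
    (hψcont.mono Set.Ioi_subset_Ici_self).aestronglyMeasurable measurableSet_Ioi
  have hψint : IntegrableOn ψ (Set.Ioi 0) := by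
    apply Integrable.mono' (hw_int.const_mul (Real.sqrt I₀ * N)) hψmeas
    filter_upwards [ae_restrict_mem measurableSet_Ioi] with t ht
    rw [Real.norm_eq_abs]
    exact key t ht.le
  refine ⟨hψint, ?_⟩
  have hmono : ∫ x in Set.Ioi 0, |ψ x|
      ≤ ∫ x in Set.Ioi 0, Real.sqrt I₀ * N * w x ^ (-(1/3) : ℝ) := by
    apply integral_mono_ae hψint.abs (hw_int.const_mul _)
    filter_upwards [ae_restrict_mem measurableSet_Ioi] with t ht
    exact key t ht.le
  have heval : ∫ x in Set.Ioi 0, Real.sqrt I₀ * N * w x ^ (-(1/3) : ℝ)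
      = Real.sqrt I₀ * N * I₀ := integral_const_mul _ _
  have hfinal : Real.sqrt I₀ * N * I₀ = I₀ ^ ((3:ℝ)/2) * N := by
    have h : I₀ ^ ((3:ℝ)/2) = Real.sqrt I₀ * I₀ := by
      rw [Real.sqrt_eq_rpow, show ((3:ℝ)/2) = 1/2 + 1 by norm_num,
        Real.rpow_add' hI₀nonneg (by norm_num), Real.rpow_one]
    rw [h]; ring
  calc ∫ x in Set.Ioi 0, |ψ x|
      ≤ ∫ x in Set.Ioi 0, Real.sqrt I₀ * N * w x ^ (-(1/3) : ℝ) := hmono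
    _ = Real.sqrt I₀ * N * I₀ := heval
    _ = I₀ ^ ((3:ℝ)/2) * N := hfinal
end

section
/- Let d ≥ 1, let φ₁, …, φ_d : [0,∞) → ℝ be linearly independent functions, let γ₁, …, γ_d ∈ ℝ, and let B_{i,jk} (i,j,k ∈ {1,…,d}) be real coefficients such that for all x ≥ 0 and all j,k: Σᵢ (B_{i,jk} + B_{i,kj}) φᵢ(x) = φⱼ(x) γ_k + φ_k(x) γⱼ. Then for every i and every z ∈ ℝ^d: Σ_{j,k} B_{i,jk} z_j z_k = z_i · Σ_k γ_k z_k. -/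
/-- Matching quadratic coefficients in the affine consistency equation:
if `φ₁,…,φ_d : [0,∞) → ℝ` are linearly independent and
`Σᵢ (B_{i,jk} + B_{i,kj}) φᵢ(x) = φⱼ(x)γₖ + φₖ(x)γⱼ` for all `x ≥ 0` and
all `j,k`, then `Σ_{j,k} B_{i,jk} zⱼ zₖ = zᵢ Σₖ γₖ zₖ` for all `i, z`. -/
theorem affine_quadratic_drift_form
    (d : ℕ) (hd : 1 ≤ d) (φ : Fin d → ℝ → ℝ)
    (hli : LinearIndependent ℝ fun i => (Set.Ici (0:ℝ)).restrict (φ i))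
    (γ : Fin d → ℝ) (B : Fin d → Fin d → Fin d → ℝ)
    (hB : ∀ x ≥ (0:ℝ), ∀ j k : Fin d,
      ∑ i, (B i j k + B i k j) * φ i x = φ j x * γ k + φ k x * γ j) :
    ∀ (i : Fin d) (z : Fin d → ℝ),
      ∑ j, ∑ k, B i j k * z j * z k = z i * ∑ k, γ k * z k := by
  -- Step 1: identify coefficients via linear independence
  have key : ∀ i j k : Fin d, B i j k + B i k j =
      (if i = j then γ k else 0) + (if i = k then γ j else 0) := by
    intro i j k
    have h := Fintype.linearIndependent_iff.mp hli
      (fun i => B i j k + B i k j -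
        ((if i = j then γ k else 0) + (if i = k then γ j else 0)))
    have hz : ∑ i, (B i j k + B i k j -
        ((if i = j then γ k else 0) + (if i = k then γ j else 0))) •
        (Set.Ici (0:ℝ)).restrict (φ i) = 0 := by
      funext x
      obtain ⟨x, hx⟩ := x
      simp only [Finset.sum_apply, Pi.smul_apply, Set.restrict_apply, smul_eq_mul,
        Pi.zero_apply, sub_mul, Finset.sum_sub_distrib]
      change ∑ i, (B i j k + B i k j) * φ i x - ∑ i, ((if i = j then γ k else 0) +
        (if i = k then γ j else 0)) * φ i x = 0
      rw [hB x hx j k]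
      have h1 : ∑ i, ((if i = j then γ k else 0) + (if i = k then γ j else 0)) * φ i x
          = φ j x * γ k + φ k x * γ j := by
        simp [mul_add, Finset.sum_add_distrib, mul_ite, mul_zero, Finset.sum_ite_eq', mul_comm]
      rw [h1]; ring
    have := h hz i
    linarith [this]
  intro i z
  have swap : ∑ j, ∑ k, B i k j * z j * z k = ∑ j, ∑ k, B i j k * z j * z k := by
    rw [Finset.sum_comm]
    exact Finset.sum_congr rfl fun j _ => Finset.sum_congr rfl fun k _ => by ring
  have hA : ∑ j, ∑ k, (if i = j then γ k else 0) * z j * z k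
      = z i * ∑ k, γ k * z k := by
    rw [Finset.mul_sum, Finset.sum_eq_single i]
    · exact Finset.sum_congr rfl fun k _ => by simp; ring
    · intro j _ hj; simp [Ne.symm hj]
    · simp
  have hC : ∑ j, ∑ k, (if i = k then γ j else 0) * z j * z k
      = z i * ∑ k, γ k * z k := by
    rw [Finset.sum_comm, Finset.mul_sum, Finset.sum_eq_single i]
    · exact Finset.sum_congr rfl fun k _ => by simp; ring
    · intro j _ hj; simp [Ne.symm hj]
    · simp
  have h2 : ∑ j, ∑ k, (B i j k + B i k j) * z j * z k
      = 2 * (z i * ∑ k, γ k * z k) := by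
    simp_rw [key, add_mul, Finset.sum_add_distrib]
    rw [hA, hC]; ring
  have h3 : ∑ j, ∑ k, (B i j k + B i k j) * z j * z k
      = (∑ j, ∑ k, B i j k * z j * z k) + (∑ j, ∑ k, B i k j * z j * z k) := by
    simp_rw [add_mul, Finset.sum_add_distrib]
  rw [h3, swap] at h2
  linarith
end

section
/- Let d ≥ 1 and κ, θ, q ∈ ℝ^d. Define v(u) := 1 + Σⱼ uⱼ, drift functions μᵢ(u) := κᵢ uᵢ + θᵢ v(u), and diagonal diffusion functions cᵢᵢ(u) := qᵢ² uᵢ v(u) on [0,∞)^d, and let G : [0,∞)^d → ℝ^d be given by G_i(u) = u_i / v(u). Then there exist b ∈ ℝ^d, β ∈ ℝ^{d×d}, and γ ∈ ℝ^d such that for every u ∈ [0,∞)^d, writing z := G(u), one has for each i: Σⱼ μⱼ(u) ∂G_i/∂uⱼ(u) + (1/2) Σⱼ cⱼⱼ(u) ∂²G_i/∂uⱼ²(u) = bᵢ + Σⱼ βᵢⱼ zⱼ + zᵢ Σⱼ γⱼ zⱼ. -/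
private lemma aux_d1 (a e A : ℝ) {x : ℝ} (h : A + x ≠ 0) :
    HasDerivAt (fun s => (a + e * s) / (A + s)) ((e * A - a) / (A + x) ^ 2) x := by
  have h1 : HasDerivAt (fun s : ℝ => a + e * s) e x := by
    simpa using ((hasDerivAt_id x).const_mul e).const_add a
  have h2 : HasDerivAt (fun s : ℝ => A + s) 1 x := by
    simpa using (hasDerivAt_id x).const_add A
  have := h1.fun_div h2 h
  refine this.congr_deriv ?_
  ring

private lemma aux_d2 (K A : ℝ) {x : ℝ} (h : A + x ≠ 0) :
    HasDerivAt (fun s => K / (A + s) ^ 2) (-2 * K / (A + x) ^ 3) x := by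
  have h2 : HasDerivAt (fun s : ℝ => (A + s) ^ 2) (2 * (A + x)) x := by
    have := (((hasDerivAt_id x).const_add A)).fun_pow 2
    simpa using this
  have := (hasDerivAt_const x K).fun_div h2 (pow_ne_zero 2 h)
  refine this.congr_deriv ?_
  rw [div_eq_div_iff (pow_ne_zero 2 (pow_ne_zero 2 h)) (pow_ne_zero 3 h)]
  ring

private lemma aux_dd2 (a e A : ℝ) {x : ℝ} (h : 0 < A + x) :
    iteratedDeriv 2 (fun s => (a + e * s) / (A + s)) x
      = -2 * (e * A - a) / (A + x) ^ 3 := by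
  rw [iteratedDeriv_succ, iteratedDeriv_one]
  have hev : (deriv fun s => (a + e * s) / (A + s))
      =ᶠ[nhds x] fun s => (e * A - a) / (A + s) ^ 2 := by
    have hx : ∀ᶠ s in nhds x, -A < s := eventually_gt_nhds (by linarith)
    filter_upwards [hx] with s hs
    exact (aux_d1 a e A (by linarith)).deriv
  rw [hev.deriv_eq]
  exact (aux_d2 (e * A - a) A h.ne').deriv

/-- Applying the diffusion generator of `U` (drift `μᵢ(u) = κᵢuᵢ + θᵢv(u)`,
diagonal diffusion `cᵢᵢ(u) = qᵢ²uᵢv(u)`, `v(u) = 1 + Σⱼuⱼ`) to the coordinates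
of `G(u)_i = uᵢ/v(u)` yields a quadratic polynomial in `z = G(u)` of the
consistent form `bᵢ + Σⱼ βᵢⱼ zⱼ + zᵢ Σⱼ γⱼ zⱼ`. -/
theorem simplex_factor_drift_is_consistent_quadratic
    (d : ℕ) (hd : 1 ≤ d) (κ θ q : Fin d → ℝ)
    (v : (Fin d → ℝ) → ℝ) (hv : ∀ u, v u = 1 + ∑ j, u j)
    (μ : Fin d → (Fin d → ℝ) → ℝ) (hμ : ∀ i u, μ i u = κ i * u i + θ i * v u)
    (c : Fin d → (Fin d → ℝ) → ℝ) (hc : ∀ i u, c i u = q i ^ 2 * u i * v u)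
    (G : (Fin d → ℝ) → Fin d → ℝ) (hG : ∀ u i, G u i = u i / v u) :
    ∃ (b : Fin d → ℝ) (β : Fin d → Fin d → ℝ) (γ : Fin d → ℝ),
      ∀ u : Fin d → ℝ, (∀ j, 0 ≤ u j) → ∀ i : Fin d,
        (∑ j, μ j u * deriv (fun s => G (Function.update u j s) i) (u j))
          + (1 / 2) * ∑ j, c j u *
              iteratedDeriv 2 (fun s => G (Function.update u j s) i) (u j)
        = b i + ∑ j, β i j * G u j + G u i * ∑ j, γ j * G u j := by
  refine ⟨θ, fun i j => if i = j then κ i - q i ^ 2 - ∑ k, θ k else 0,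
    fun j => q j ^ 2 - κ j, ?_⟩
  intro u hu i
  set w : ℝ := 1 + ∑ k, u k with hw
  have hupos : (0:ℝ) ≤ ∑ k, u k := Finset.sum_nonneg fun k _ => hu k
  have hwpos : 0 < w := by positivity
  have hw0 : w ≠ 0 := hwpos.ne'
  -- sums over updates
  have hsum : ∀ (j : Fin d) (s : ℝ),
      ∑ k, Function.update u j s k = (∑ k, u k) + (s - u j) := by
    intro j s
    have h1 : ∀ k, Function.update u j s k = u k + (if k = j then s - u j else 0) := by
      intro k
      rcases eq_or_ne k j with rfl | hkj
      · simp
      · simp [Function.update_of_ne hkj, hkj]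
    simp only [h1, Finset.sum_add_distrib, Finset.sum_ite_eq' Finset.univ j]
    simp
  -- rewrite each coordinate function
  have hfun : ∀ j : Fin d, (fun s => G (Function.update u j s) i)
      = fun s => ((if i = j then 0 else u i) + (if i = j then (1:ℝ) else 0) * s)
          / ((w - u j) + s) := by
    intro j
    funext s
    rw [hG, hv, hsum]
    by_cases hij : i = j
    · have h0 : Function.update u j s i = s := by rw [hij]; simp
      rw [h0, if_pos hij, if_pos hij, hw]; ring_nf
    · have h0 : Function.update u j s i = u i := Function.update_of_ne hij _ _
      rw [h0, if_neg hij, if_neg hij, hw]; ring_nf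
  have hAx : ∀ j : Fin d, 0 < (w - u j) + u j := by intro j; simpa using hwpos
  -- the key values: (e*A - a) = (if i = j then w else 0) - u i
  have hval : ∀ j : Fin d,
      (if i = j then (1:ℝ) else 0) * (w - u j) - (if i = j then 0 else u i)
        = (if i = j then w else 0) - u i := by
    intro j
    rcases eq_or_ne i j with rfl | hij
    · simp
    · simp [hij]
  have hderiv : ∀ j : Fin d,
      deriv (fun s => G (Function.update u j s) i) (u j)
        = ((if i = j then w else 0) - u i) / w ^ 2 := by
    intro j
    rw [hfun j,
      (aux_d1 (if i = j then 0 else u i) (if i = j then (1:ℝ) else 0) (w - u j)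
        (hAx j).ne').deriv, hval j]
    congr 2
    ring
  have hderiv2 : ∀ j : Fin d,
      iteratedDeriv 2 (fun s => G (Function.update u j s) i) (u j)
        = -2 * ((if i = j then w else 0) - u i) / w ^ 3 := by
    intro j
    rw [hfun j,
      aux_dd2 (if i = j then 0 else u i) (if i = j then (1:ℝ) else 0) (w - u j)
        (hAx j), hval j]
    congr 2
    ring
  simp only [hderiv, hderiv2]
  simp only [hμ, hc, hG, hv, ← hw]
  -- closed forms of the sums
  have key : ∀ g : Fin d → ℝ,
      ∑ j, g j * (((if i = j then w else 0) - u i) / w ^ 2)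
        = (g i * w - u i * ∑ j, g j) / w ^ 2 := by
    intro g
    have h1 : ∀ j, g j * (((if i = j then w else 0) - u i) / w ^ 2)
        = (if i = j then g j * w / w ^ 2 else 0) - g j * u i / w ^ 2 := by
      intro j
      rcases eq_or_ne i j with rfl | hij
      · simp; ring
      · simp [hij]; ring
    rw [Finset.sum_congr rfl fun j _ => h1 j, Finset.sum_sub_distrib,
      Finset.sum_ite_eq Finset.univ i (fun j => g j * w / w ^ 2)]
    have h2 : ∑ j, g j * u i / w ^ 2 = u i * (∑ j, g j) / w ^ 2 := by
      rw [← Finset.sum_div, ← Finset.sum_mul, mul_comm]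
    rw [h2]
    simp [div_sub_div_same]
  have key2 : ∀ g : Fin d → ℝ,
      ∑ j, g j * (-2 * ((if i = j then w else 0) - u i) / w ^ 3)
        = -2 * (g i * w - u i * ∑ j, g j) / w ^ 3 := by
    intro g
    have : ∀ j, g j * (-2 * ((if i = j then w else 0) - u i) / w ^ 3)
        = (-2 / w) * (g j * (((if i = j then w else 0) - u i) / w ^ 2)) := by
      intro j
      field_simp
    simp only [this, ← Finset.mul_sum, key]
    field_simp
  rw [key fun j => κ j * u j + θ j * w, key2 fun j => q j ^ 2 * u j * w]
  -- expand the sums on both sides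
  have hR1 : ∑ j, (if i = j then κ i - q i ^ 2 - ∑ k, θ k else 0) * (u j / w)
      = (κ i - q i ^ 2 - ∑ k, θ k) * (u i / w) := by
    rw [Finset.sum_congr rfl (fun j _ => ite_mul _ _ _ _)]
    simp [Finset.sum_ite_eq Finset.univ i fun j => (κ i - q i ^ 2 - ∑ k, θ k) * (u j / w)]
  have hR2 : ∑ j, (q j ^ 2 - κ j) * (u j / w)
      = ((∑ j, q j ^ 2 * u j) - ∑ j, κ j * u j) / w := by
    rw [← Finset.sum_sub_distrib, Finset.sum_div]
    exact Finset.sum_congr rfl fun j _ => by ring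
  rw [hR1, hR2]
  have hL1 : ∑ j, (κ j * u j + θ j * w)
      = (∑ j, κ j * u j) + (∑ j, θ j) * w := by
    rw [Finset.sum_add_distrib, Finset.sum_mul]
  have hL2 : ∑ j, q j ^ 2 * u j * w = (∑ j, q j ^ 2 * u j) * w := by
    rw [Finset.sum_mul]
  rw [hL1, hL2]
  field_simp
  ring
end
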